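/- Let T and S be bounded operators on a complex Hilbert space H, let n ≥ 1, and let λ₀, λ₁, …, λ_n be complex scalars with λ₀ ≠ 0. The (n+1)-Kronecker representations (M_T, f_T) and (M_S, f_S), where f_{α₀} = ∑_{k=0}^{n} λ_k T^k (resp. ∑ λ_k S^k) and f_{α_k} = T^k (resp. S^k) for k = 1, …, n, are isomorphic — i.e., there exist invertible bounded operators φ₁, φ₂ on H with φ₂ T^k = S^k φ₁ for k = 1, …, n and φ₂ (∑_{k=0}^{n} λ_k T^k) = (∑_{k=0}^{n} λ_k S^k) φ₁ — if and only if T and S are similar, i.e., there exists an invertible bounded operator W on H with W T = S W. -/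
import Mathlib


/-- **Isomorphism of the `(n+1)`-Kronecker representations `(M_T, f_T)` and `(M_S, f_S)`
is equivalent to similarity of `T` and `S`.**
Here `f_{α₀} = ∑_{k=0}^n λ_k T^k` (resp. `S`), `f_{α_k} = T^k` (resp. `S^k`) for
`k = 1, …, n`, with `λ₀ ≠ 0`.  An isomorphism is a pair of invertible bounded operators
`(φ₁, φ₂)` intertwining all the arrow operators; similarity of `T` and `S` means there is
an invertible bounded operator `W` with `W T = S W`. -/
theorem stmt_8 {H : Type*} [NormedAddCommGroup H] [InnerProductSpace ℂ H]
    [CompleteSpace H] (T S : H →L[ℂ] H) (n : ℕ) (hn : 1 ≤ n)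
    (lam : ℕ → ℂ) (hlam : lam 0 ≠ 0) :
    (∃ φ₁ φ₂ : H →L[ℂ] H, IsUnit φ₁ ∧ IsUnit φ₂ ∧
      (∀ k : ℕ, 1 ≤ k → k ≤ n →
        φ₂ ∘L (T ^ k : H →L[ℂ] H) = (S ^ k : H →L[ℂ] H) ∘L φ₁) ∧
      φ₂ ∘L (∑ k ∈ Finset.range (n + 1), lam k • T ^ k) =
        (∑ k ∈ Finset.range (n + 1), lam k • S ^ k) ∘L φ₁)
    ↔ (∃ W : H →L[ℂ] H, IsUnit W ∧ W ∘L T = S ∘L W) := by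
  constructor
  · rintro ⟨φ₁, φ₂, h₁, h₂, hk, hsum⟩
    have hk' : ∀ k : ℕ, 1 ≤ k → k ≤ n → φ₂ * (T ^ k) = (S ^ k) * φ₁ := hk
    have hsum' : φ₂ * (∑ k ∈ Finset.range (n + 1), lam k • T ^ k) =
        (∑ k ∈ Finset.range (n + 1), lam k • S ^ k) * φ₁ := hsum
    rw [Finset.sum_range_succ', Finset.sum_range_succ', mul_add, add_mul,
      Finset.mul_sum, Finset.sum_mul] at hsum'
    have hcongr : ∀ k ∈ Finset.range n,
        φ₂ * (lam (k+1) • T ^ (k+1)) = lam (k+1) • S ^ (k+1) * φ₁ := by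
      intro k hkk
      rw [Finset.mem_range] at hkk
      rw [mul_smul_comm, smul_mul_assoc,
        hk' (k+1) (Nat.succ_le_succ (Nat.zero_le _)) hkk]
    rw [Finset.sum_congr rfl hcongr] at hsum'
    · have hc := add_left_cancel hsum'
      have h0 : lam 0 • φ₂ = lam 0 • φ₁ := by
        simpa [mul_smul_comm, smul_mul_assoc] using hc
      have heq : φ₂ = φ₁ := smul_right_injective (H →L[ℂ] H) hlam h0
      refine ⟨φ₁, h₁, ?_⟩
      have h1 := hk' 1 le_rfl hn
      rw [pow_one, pow_one, heq] at h1
      exact h1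
  · rintro ⟨W, hW, hWT⟩
    have hs : SemiconjBy W T S := hWT
    refine ⟨W, W, hW, hW, fun k _ _ => (hs.pow_right k).eq, ?_⟩
    show W * _ = _ * W
    rw [Finset.mul_sum, Finset.sum_mul]
    exact Finset.sum_congr rfl fun k _ => by
      rw [mul_smul_comm, smul_mul_assoc, (hs.pow_right k).eq]
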